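/- Let V be a finite-dimensional complex Hilbert space with anticommuting square-zero operators Q⁺, Q⁻ satisfying the Hodge relations, and an sl(2)-triple Π, L, Λ (with Π† = Π, L† = Λ) acting such that [L, Q⁺] = Q⁻, [Λ, Q⁻] = Q⁺, [L, Q⁻] = 0, [Λ, Q⁺] = 0, and [Δ, L] = [Δ, Λ] = [Δ, Π] = 0. Then the operators Π, L, Λ preserve ker Δ = ker Q⁺ ∩ ker Q̄₊ ∩ ker Q⁻ ∩ ker Q̄₋, hence induce an sl(2)-action on the Q⁻-cohomology ker Q⁻/im Q⁻ via the harmonic-representative isomorphism. -/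

import Mathlib

open LinearMap (adjoint)

private lemma harm_ker {V : Type*} [NormedAddCommGroup V] [InnerProductSpace ℂ V]
    [FiniteDimensional ℂ V] (A : V →ₗ[ℂ] V) (x : V)
    (h : (A ∘ₗ adjoint A + adjoint A ∘ₗ A) x = 0) : A x = 0 ∧ adjoint A x = 0 := by
  have h1 : inner ℂ x ((A ∘ₗ adjoint A + adjoint A ∘ₗ A) x) = (0 : ℂ) := by
    rw [h]; simp
  have h2 : inner ℂ x (A (adjoint A x)) + inner ℂ x (adjoint A (A x)) = (0 : ℂ) := by
    simpa [LinearMap.add_apply, inner_add_right] using h1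
  rw [LinearMap.adjoint_inner_right] at h2
  nth_rewrite 1 [← LinearMap.adjoint_adjoint A] at h2
  rw [LinearMap.adjoint_inner_right] at h2
  rw [inner_self_eq_norm_sq_to_K (𝕜 := ℂ), inner_self_eq_norm_sq_to_K (𝕜 := ℂ)] at h2
  have h3 : (‖adjoint A x‖ ^ 2 + ‖A x‖ ^ 2 : ℝ) = 0 := by
    have h2' : ((‖adjoint A x‖ ^ 2 + ‖A x‖ ^ 2 : ℝ) : ℂ) = 0 := by push_cast; exact h2
    exact_mod_cast h2'
  have h4 : ‖A x‖ = 0 ∧ ‖adjoint A x‖ = 0 := by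
    constructor <;> nlinarith [sq_nonneg ‖A x‖, sq_nonneg ‖adjoint A x‖, norm_nonneg (A x),
      norm_nonneg (adjoint A x)]
  exact ⟨norm_eq_zero.mp h4.1, norm_eq_zero.mp h4.2⟩

/-- Lefschetz `sl(2)` on harmonic space: under the Hodge relations and the
stated `sl(2)` commutation relations, `ker Δ = ker Q⁺ ∩ ker Q̄₊ ∩ ker Q⁻ ∩ ker Q̄₋`
and the operators `Π, L, Λ` preserve `ker Δ`, hence induce an `sl(2)`-action on
the `Q⁻`-cohomology via the harmonic-representative isomorphism. -/
theorem stmt15 {V : Type*} [NormedAddCommGroup V] [InnerProductSpace ℂ V]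
    [FiniteDimensional ℂ V]
    (Qp Qm Pi L Λ : V →ₗ[ℂ] V)
    (hQp : Qp ∘ₗ Qp = 0) (hQm : Qm ∘ₗ Qm = 0)
    (hanti : Qp ∘ₗ Qm + Qm ∘ₗ Qp = 0)
    (hPisa : adjoint Pi = Pi) (hLΛ : adjoint L = Λ)
    -- Hodge relations [Qᵅ, (Qᵝ)†] = δᵅᵝ Δ
    (Δ : V →ₗ[ℂ] V)
    (hΔp : Qp ∘ₗ adjoint Qp + adjoint Qp ∘ₗ Qp = Δ)
    (hΔm : Qm ∘ₗ adjoint Qm + adjoint Qm ∘ₗ Qm = Δ)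
    (hcrosspm : Qp ∘ₗ adjoint Qm + adjoint Qm ∘ₗ Qp = 0)
    (hcrossmp : Qm ∘ₗ adjoint Qp + adjoint Qp ∘ₗ Qm = 0)
    -- sl(2) action
    (hLQp : L ∘ₗ Qp - Qp ∘ₗ L = Qm)
    (hΛQm : Λ ∘ₗ Qm - Qm ∘ₗ Λ = Qp)
    (hLQm : L ∘ₗ Qm - Qm ∘ₗ L = 0)
    (hΛQp : Λ ∘ₗ Qp - Qp ∘ₗ Λ = 0)
    (hΔL : Δ ∘ₗ L = L ∘ₗ Δ) (hΔΛ : Δ ∘ₗ Λ = Λ ∘ₗ Δ) (hΔPi : Δ ∘ₗ Pi = Pi ∘ₗ Δ) :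
    LinearMap.ker Δ = LinearMap.ker Qp ⊓ LinearMap.ker (adjoint Qp) ⊓
      LinearMap.ker Qm ⊓ LinearMap.ker (adjoint Qm) ∧
    (∀ x ∈ LinearMap.ker Δ, Pi x ∈ LinearMap.ker Δ) ∧
    (∀ x ∈ LinearMap.ker Δ, L x ∈ LinearMap.ker Δ) ∧
    (∀ x ∈ LinearMap.ker Δ, Λ x ∈ LinearMap.ker Δ) ∧
    (∀ x : V, Qm x = 0 → ∃! y : V, Δ y = 0 ∧ ∃ z : V, x = y + Qm z) := by
  -- kernel description
  have hker : LinearMap.ker Δ = LinearMap.ker Qp ⊓ LinearMap.ker (adjoint Qp) ⊓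
      LinearMap.ker Qm ⊓ LinearMap.ker (adjoint Qm) := by
    ext x
    simp only [Submodule.mem_inf, LinearMap.mem_ker]
    constructor
    · intro hx
      have hp := harm_ker Qp x (by rw [hΔp]; exact hx)
      have hm := harm_ker Qm x (by rw [hΔm]; exact hx)
      exact ⟨⟨⟨hp.1, hp.2⟩, hm.1⟩, hm.2⟩
    · rintro ⟨⟨⟨h1, h2⟩, h3⟩, h4⟩
      rw [← hΔm]
      simp [LinearMap.add_apply, LinearMap.comp_apply, h3, h4]
  -- self-adjointness of Δ
  have hΔsa : adjoint Δ = Δ := by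
    rw [← hΔp, map_add, LinearMap.adjoint_comp, LinearMap.adjoint_comp,
      LinearMap.adjoint_adjoint, add_comm]
  -- membership helpers
  have hkQm : ∀ x, Δ x = 0 → Qm x = 0 := by
    intro x hx
    have := (LinearMap.mem_ker.mpr hx : x ∈ LinearMap.ker Δ)
    rw [hker] at this
    simpa using this.1.2
  have hkQmadj : ∀ x, Δ x = 0 → adjoint Qm x = 0 := by
    intro x hx
    have := (LinearMap.mem_ker.mpr hx : x ∈ LinearMap.ker Δ)
    rw [hker] at this
    simpa using this.2
  refine ⟨hker, ?_, ?_, ?_, ?_⟩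
  · intro x hx
    have : Δ (Pi x) = Pi (Δ x) := by
      have := congrArg (fun f => f x) hΔPi; simpa using this
    simp only [LinearMap.mem_ker] at hx ⊢
    rw [this, hx, map_zero]
  · intro x hx
    have : Δ (L x) = L (Δ x) := by
      have := congrArg (fun f => f x) hΔL; simpa using this
    simp only [LinearMap.mem_ker] at hx ⊢
    rw [this, hx, map_zero]
  · intro x hx
    have : Δ (Λ x) = Λ (Δ x) := by
      have := congrArg (fun f => f x) hΔΛ; simpa using this
    simp only [LinearMap.mem_ker] at hx ⊢
    rw [this, hx, map_zero]
  · -- Hodge decomposition / uniqueness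
    -- ker Δ ⊔ range Δ = ⊤
    have hdisj : Disjoint (LinearMap.ker Δ) (LinearMap.range Δ) := by
      rw [Submodule.disjoint_def]
      rintro v hv ⟨w, rfl⟩
      have hv0 : Δ (Δ w) = 0 := hv
      have : inner ℂ (Δ w) (Δ w) = (0 : ℂ) := by
        nth_rewrite 1 [← hΔsa]
        rw [LinearMap.adjoint_inner_left, hv0, inner_zero_right]
      exact inner_self_eq_zero.mp this
    have hsup : LinearMap.ker Δ ⊔ LinearMap.range Δ = ⊤ := by
      apply Submodule.eq_top_of_disjoint
      · rw [add_comm]; exact (LinearMap.finrank_range_add_finrank_ker Δ).ge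
      · exact hdisj
    intro x hx
    -- existence
    obtain ⟨y, hy, w', ⟨w, rfl⟩, hxyw⟩ :=
      Submodule.mem_sup.mp (hsup ▸ Submodule.mem_top : x ∈ LinearMap.ker Δ ⊔ LinearMap.range Δ)
    have hyΔ : Δ y = 0 := hy
    -- show adjoint Qm (Qm w) = 0
    have hQmx : Qm (Δ w) = 0 := by
      have : Δ w = x - y := by rw [← hxyw]; abel
      rw [this, map_sub, hx, hkQm y hyΔ, sub_zero]
    have hkey : Qm (adjoint Qm (Qm w)) = 0 := by
      have hΔw : Δ w = Qm (adjoint Qm w) + adjoint Qm (Qm w) := by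
        rw [← hΔm]; simp [LinearMap.add_apply, LinearMap.comp_apply]
      have h2 : Qm (Qm (adjoint Qm w)) = 0 := by
        have := congrArg (fun f => f (adjoint Qm w)) hQm; simpa using this
      rw [hΔw, map_add, h2, zero_add] at hQmx
      exact hQmx
    have hadj0 : adjoint Qm (Qm w) = 0 := by
      have : inner ℂ (adjoint Qm (Qm w)) (adjoint Qm (Qm w)) = (0 : ℂ) := by
        rw [LinearMap.adjoint_inner_left, hkey, inner_zero_right]
      exact inner_self_eq_zero.mp this
    have hxdec : x = y + Qm (adjoint Qm w) := by
      have hΔw : Δ w = Qm (adjoint Qm w) + adjoint Qm (Qm w) := by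
        rw [← hΔm]; simp [LinearMap.add_apply, LinearMap.comp_apply]
      rw [← hxyw, hΔw, hadj0, add_zero]
    refine ⟨y, ⟨hyΔ, adjoint Qm w, hxdec⟩, ?_⟩
    -- uniqueness
    rintro y' ⟨hy'Δ, z', hxz'⟩
    have heq : y + Qm (adjoint Qm w) = y' + Qm z' := hxdec.symm.trans hxz'
    have hy' : y' = y + Qm (adjoint Qm w) - Qm z' := eq_sub_of_add_eq heq.symm
    have hdiff : y' - y = Qm ((adjoint Qm w) - z') := by
      rw [map_sub, hy']; abel
    have hmem : Δ (y' - y) = 0 := by rw [map_sub, hy'Δ, hyΔ, sub_zero]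
    have : inner ℂ (y' - y) (y' - y) = (0 : ℂ) := by
      nth_rewrite 1 [hdiff]
      rw [← LinearMap.adjoint_inner_right, hkQmadj _ hmem, inner_zero_right]
    exact sub_eq_zero.mp (inner_self_eq_zero.mp this)
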